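/- Let t0 < T, θ ∈ (0,1), γ > 0, b > 0, x0 ∈ ℝ, and let f : [t0,T] × ℝ → ℝ be continuous and satisfy |f(t,y1) − f(t,y2)| ≤ A|y1 − y2| for all t ∈ [t0,T] and y1, y2 ∈ ℝ, with A > 0. Define, for continuous x : [t0,T] → ℝ, (Υx)(t) = x0 + ((1−θ)/b) f(t, x(t)) + Σ_{i=1}^∞ C(γ,i) θ^i / (b (1−θ)^{i−1} Γ(iθ)) ∫_{t0}^t (t−s)^{iθ−1} f(s, x(s)) ds. Then for all continuous x1, x2 : [t0,T] → ℝ and all t ∈ [t0,T], |(Υx1)(t) − (Υx2)(t)| ≤ C2(T,A) · sup_{s ∈ [t0,T]} |x1(s) − x2(s)|, where C2(T,A) = (A/b)[(1−θ) + Σ_{i=1}^∞ |C(γ,i)| θ^i (T−t0)^{iθ} / ((1−θ)^{i−1} Γ(iθ+1))]. -/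

import Mathlib

open Real MeasureTheory Set

/-- Generalized binomial coefficient `C(γ, i) = γ(γ-1)⋯(γ-i+1)/i!`. -/
noncomputable def genBinom (γ : ℝ) (i : ℕ) : ℝ :=
  (∏ j ∈ Finset.range i, (γ - j)) / (Nat.factorial i : ℝ)

/-- Rising factorial `(ρ)_k = ρ(ρ+1)⋯(ρ+k-1)`. -/
noncomputable def risingFac (ρ : ℝ) (k : ℕ) : ℝ :=
  ∏ j ∈ Finset.range k, (ρ + j)

/-- Generalized Mittag-Leffler function `E_{θ,β}^ρ(λ, z)`
(terms with `Γ` at a pole vanish since `Real.Gamma` is `0` there). -/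
noncomputable def mittagLeffler (θ β ρ lam z : ℝ) : ℝ :=
  ∑' k : ℕ, lam ^ k * z ^ ((k : ℝ) * θ + β - 1) * risingFac ρ k /
    (Real.Gamma ((k : ℝ) * θ + β) * (Nat.factorial k : ℝ))

/-- Generalized AB fractional integral `(I^{θ,μ,γ} η)(t)` starting at `t0`,
with normalization constant `b = B(θ) > 0`. -/
noncomputable def ABIntegral (t0 b θ μ γ : ℝ) (η : ℝ → ℝ) (t : ℝ) : ℝ :=
  ∑' i : ℕ, genBinom γ i * θ ^ i /
      (b * (1 - θ) ^ ((i : ℝ) - 1) * Real.Gamma ((i : ℝ) * θ + 1 - μ)) *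
    ∫ s in t0..t, (t - s) ^ ((i : ℝ) * θ - μ) * η s

/-- Generalized ABC fractional derivative `(D^{θ,μ,γ} f)(t)` starting at `t0`,
with `λ = -θ/(1-θ)` and normalization constant `b = B(θ) > 0`. -/
noncomputable def ABCDeriv (t0 b θ μ γ : ℝ) (f : ℝ → ℝ) (t : ℝ) : ℝ :=
  (b / (1 - θ)) * ∫ s in t0..t, mittagLeffler θ μ γ (-θ / (1 - θ)) (t - s) * deriv f s

/-- Generalized ABR fractional derivative `(R^{θ,μ,γ} f)(t)` starting at `t0`. -/
noncomputable def ABRDeriv (t0 b θ μ γ : ℝ) (f : ℝ → ℝ) (t : ℝ) : ℝ :=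
  (b / (1 - θ)) *
    deriv (fun u => ∫ s in t0..u, mittagLeffler θ μ γ (-θ / (1 - θ)) (u - s) * f s) t

/-- The contraction constant `C1(T, A)` (case `μ ≠ 1`). -/
noncomputable def C1const (t0 T b θ μ γ A : ℝ) : ℝ :=
  (A / b) * ∑' i : ℕ, |genBinom γ i| * θ ^ i * (T - t0) ^ ((i : ℝ) * θ + 1 - μ) /
    ((1 - θ) ^ ((i : ℝ) - 1) * Real.Gamma ((i : ℝ) * θ + 2 - μ))

/-- The contraction constant `C2(T, A)` (case `μ = 1`). -/
noncomputable def C2const (t0 T b θ γ A : ℝ) : ℝ :=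
  (A / b) * ((1 - θ) +
    ∑' i : ℕ, |genBinom γ (i + 1)| * θ ^ (i + 1) * (T - t0) ^ (((i : ℝ) + 1) * θ) /
      ((1 - θ) ^ (i : ℕ) * Real.Gamma (((i : ℝ) + 1) * θ + 1)))

/-- The operator `Υ` in the case `μ = 1`, whose `i = 0` term reduces to `((1-θ)/b) f(t, x(t))`. -/
noncomputable def UpsilonMuOne (t0 b θ γ x0 : ℝ) (f : ℝ → ℝ → ℝ) (x : ℝ → ℝ) (t : ℝ) : ℝ :=
  x0 + ((1 - θ) / b) * f t (x t) +
    ∑' i : ℕ, genBinom γ (i + 1) * θ ^ (i + 1) /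
        (b * (1 - θ) ^ (i : ℕ) * Real.Gamma (((i : ℝ) + 1) * θ)) *
      ∫ s in t0..t, (t - s) ^ (((i : ℝ) + 1) * θ - 1) * f s (x s)
lemma abs_genBinom_le (γ : ℝ) (hγ : 0 ≤ γ) (k : ℕ) : |genBinom γ k| ≤ (γ + 1) ^ k := by
  have hfac : (0:ℝ) < (Nat.factorial k : ℝ) := by positivity
  rw [genBinom, abs_div, abs_of_pos hfac, div_le_iff₀ hfac]
  calc |∏ j ∈ Finset.range k, (γ - j)| = ∏ j ∈ Finset.range k, |γ - (j:ℝ)| := by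
        rw [Finset.abs_prod]
    _ ≤ ∏ j ∈ Finset.range k, ((γ + 1) * ((j:ℝ) + 1)) := by
        apply Finset.prod_le_prod (fun j _ => abs_nonneg _)
        intro j _
        rw [abs_le]
        constructor <;> nlinarith [Nat.cast_nonneg (α := ℝ) j]
    _ = (γ + 1) ^ k * (Nat.factorial k : ℝ) := by
        rw [Finset.prod_mul_distrib, Finset.prod_const, Finset.card_range]
        norm_cast
        rw [Finset.prod_range_add_one_eq_factorial]

lemma rpow_le_gamma (s : ℝ) (hs : 1 ≤ s) : ∃ C > 0, ∀ x : ℝ, 1 ≤ x → s ^ x ≤ C * Real.Gamma x := by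
  have hs0 : 0 < s := lt_of_lt_of_le one_pos hs
  -- min of Gamma on [1,2]
  have hcont : ContinuousOn Real.Gamma (Icc 1 2) := by
    intro y hy
    have : (0:ℝ) < y := lt_of_lt_of_le one_pos hy.1
    exact (Real.differentiableAt_Gamma (fun m => by
      have : (0:ℝ) < y := this
      intro h; rw [h] at this; have := Nat.cast_nonneg (α := ℝ) m; linarith)).continuousAt.continuousWithinAt
  obtain ⟨ym, hym, hmin⟩ := isCompact_Icc.exists_isMinOn (nonempty_Icc.2 (by norm_num)) hcont
  set m := Real.Gamma ym with hm
  have hm0 : 0 < m := Real.Gamma_pos_of_pos (lt_of_lt_of_le one_pos hym.1)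
  -- m * n! ≤ Γ (y + n) for y ∈ [1,2]
  have key : ∀ (n : ℕ) (y : ℝ), 1 ≤ y → y ≤ 2 → m * (Nat.factorial n : ℝ) ≤ Real.Gamma (y + n) := by
    intro n
    induction n with
    | zero => intro y h1 h2; simpa using hmin ⟨h1, h2⟩
    | succ n ih =>
      intro y h1 h2
      have hyn : y + (n:ℝ) ≠ 0 := by positivity
      have : Real.Gamma (y + (n+1:ℕ)) = (y + n) * Real.Gamma (y + n) := by
        push_cast
        rw [show y + ((n:ℝ) + 1) = (y + n) + 1 by ring, Real.Gamma_add_one hyn]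
      rw [this]
      have h1' := ih y h1 h2
      have : ((n:ℝ) + 1) * (m * (Nat.factorial n : ℝ)) ≤ (y + n) * Real.Gamma (y + n) := by
        apply mul_le_mul (by linarith) h1' (by positivity) (by positivity)
      calc m * (Nat.factorial (n+1) : ℝ) = ((n:ℝ)+1) * (m * (Nat.factorial n:ℝ)) := by
            push_cast [Nat.factorial_succ]; ring
        _ ≤ _ := this
  refine ⟨s ^ 2 * Real.exp s / m, by positivity, fun x hx => ?_⟩
  set n : ℕ := ⌊x⌋₊ - 1 with hn
  have hfl : 1 ≤ ⌊x⌋₊ := (Nat.one_le_floor_iff x).mpr hx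
  have hx0 : 0 ≤ x := by linarith
  have hfle : ((⌊x⌋₊ : ℝ)) ≤ x := Nat.floor_le hx0
  have hflt : x < (⌊x⌋₊ : ℝ) + 1 := Nat.lt_floor_add_one x
  have hncast : ((n:ℝ)) = (⌊x⌋₊ : ℝ) - 1 := by
    rw [hn]; push_cast [Nat.cast_sub hfl]; ring
  set y : ℝ := x - n with hy
  have hy1 : 1 ≤ y := by rw [hy, hncast]; linarith
  have hy2 : y ≤ 2 := by rw [hy, hncast]; linarith
  have hyx : y + (n:ℝ) = x := by rw [hy]; ring
  have hkey := key n y hy1 hy2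
  rw [hyx] at hkey
  -- s ^ x ≤ s ^ (n + 2)
  have h1 : s ^ x ≤ s ^ ((n:ℝ) + 2) := by
    apply Real.rpow_le_rpow_of_exponent_le hs
    rw [hncast]; linarith
  have h2 : s ^ ((n:ℝ) + 2) = s ^ 2 * s ^ (n:ℕ) := by
    rw [show ((n:ℝ) + 2) = ((n + 2 : ℕ) : ℝ) by push_cast; ring, Real.rpow_natCast]
    ring
  -- s ^ n ≤ n! * exp s
  have h3 : s ^ (n:ℕ) ≤ (Nat.factorial n : ℝ) * Real.exp s := by
    have hfp : (0:ℝ) < (Nat.factorial n : ℝ) := by positivity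
    rw [← div_le_iff₀' hfp]
    calc s ^ (n:ℕ) / (Nat.factorial n : ℝ) ≤ ∑ i ∈ Finset.range (n+1), s ^ i / (Nat.factorial i : ℝ) := by
          exact Finset.single_le_sum (f := fun i => s ^ i / (Nat.factorial i : ℝ))
            (fun i _ => by positivity) (Finset.self_mem_range_succ n)
      _ ≤ Real.exp s := Real.sum_le_exp_of_nonneg hs0.le _
  calc s ^ x ≤ s ^ 2 * s ^ (n:ℕ) := by rw [← h2]; exact h1
    _ ≤ s ^ 2 * ((Nat.factorial n : ℝ) * Real.exp s) := by
        apply mul_le_mul_of_nonneg_left h3 (by positivity)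
    _ = (s ^ 2 * Real.exp s / m) * (m * (Nat.factorial n : ℝ)) := by field_simp
    _ ≤ (s ^ 2 * Real.exp s / m) * Real.Gamma x := by
        apply mul_le_mul_of_nonneg_left hkey (by positivity)

lemma master_summable (θ γ u : ℝ) (hθ0 : 0 < θ) (hθ1 : θ < 1) (hγ : 0 ≤ γ) (hu : 0 < u) :
    Summable (fun i : ℕ => |genBinom γ (i+1)| * θ^(i+1) * u ^ (((i:ℝ)+1)*θ) /
      ((1-θ)^(i:ℕ) * Real.Gamma (((i:ℝ)+1)*θ+1))) := by
  have h1θ : 0 < 1 - θ := by linarith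
  set w : ℝ := (γ+1)*θ*u^θ/(1-θ) with hwdef
  have hw : 0 < w := by
    apply div_pos _ h1θ
    have := Real.rpow_pos_of_pos hu θ
    positivity
  set s : ℝ := (max 1 (2*w)) ^ (1/θ : ℝ) with hsdef
  have hmax0 : (0:ℝ) < max 1 (2*w) := lt_of_lt_of_le one_pos (le_max_left _ _)
  have hs1 : 1 ≤ s := Real.one_le_rpow (le_max_left _ _) (by positivity)
  have hs0 : 0 < s := lt_of_lt_of_le one_pos hs1
  have hsθ : 2*w ≤ s ^ (θ:ℝ) := by
    rw [hsdef, ← Real.rpow_mul hmax0.le, one_div, inv_mul_cancel₀ hθ0.ne', Real.rpow_one]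
    exact le_max_right _ _
  obtain ⟨C, hC, hCb⟩ := rpow_le_gamma s hs1
  set P : ℝ := (γ+1)*θ*(u^θ) with hPdef
  have hP0 : 0 < P := by
    have := Real.rpow_pos_of_pos hu θ; positivity
  have hPw : P = w * (1-θ) := by rw [hwdef]; field_simp
  have hgeom : Summable (fun i : ℕ => (C*(1-θ)/2) * (1/2:ℝ)^i) :=
    (summable_geometric_of_lt_one (by norm_num) (by norm_num)).mul_left _
  refine Summable.of_nonneg_of_le ?_ ?_ hgeom
  · intro i
    have hGpos : 0 < Real.Gamma (((i:ℝ)+1)*θ+1) := Real.Gamma_pos_of_pos (by positivity)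
    positivity
  · intro i
    have hx1 : (1:ℝ) ≤ ((i:ℝ)+1)*θ+1 := by nlinarith [Nat.cast_nonneg (α := ℝ) i]
    have hGpos : 0 < Real.Gamma (((i:ℝ)+1)*θ+1) := Real.Gamma_pos_of_pos (by positivity)
    have hG := hCb (((i:ℝ)+1)*θ+1) hx1
    have hGlb : s ^ (((i:ℝ)+1)*θ+1) / C ≤ Real.Gamma (((i:ℝ)+1)*θ+1) := by
      rw [div_le_iff₀ hC] at *; linarith [hG]
    have hu1 : u ^ (((i:ℝ)+1)*θ) = (u^θ)^(i+1) := by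
      rw [mul_comm, Real.rpow_mul hu.le, ← Real.rpow_natCast (u^θ) (i+1)]
      push_cast; ring_nf
    have hnum : |genBinom γ (i+1)| * θ^(i+1) * u ^ (((i:ℝ)+1)*θ) ≤ P^(i+1) := by
      rw [hu1, hPdef, mul_pow, mul_pow]
      have h1 := abs_genBinom_le γ hγ (i+1)
      have h2 : (0:ℝ) < u^θ := Real.rpow_pos_of_pos hu θ
      have : |genBinom γ (i+1)| * θ^(i+1) * (u^θ)^(i+1) ≤ (γ+1)^(i+1) * θ^(i+1) * (u^θ)^(i+1) := by
        apply mul_le_mul_of_nonneg_right (mul_le_mul_of_nonneg_right h1 (by positivity)) (by positivity)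
      linarith
    have hspos : (0:ℝ) < s ^ (((i:ℝ)+1)*θ+1) := Real.rpow_pos_of_pos hs0 _
    have hsx : s ^ (((i:ℝ)+1)*θ+1) = (s^θ)^(i+1) * s := by
      rw [Real.rpow_add hs0, Real.rpow_one, mul_comm (((i:ℝ)+1)) θ, Real.rpow_mul hs0.le,
        ← Real.rpow_natCast (s^θ) (i+1)]
      push_cast; ring_nf
    have hsxlb : (2*w)^(i+1) * 1 ≤ s ^ (((i:ℝ)+1)*θ+1) := by
      rw [hsx]
      apply mul_le_mul (pow_le_pow_left₀ (by positivity) hsθ _) hs1 zero_le_one (by positivity)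
    calc |genBinom γ (i+1)| * θ^(i+1) * u ^ (((i:ℝ)+1)*θ) / ((1-θ)^(i:ℕ) * Real.Gamma (((i:ℝ)+1)*θ+1))
        ≤ P^(i+1) / ((1-θ)^(i:ℕ) * (s ^ (((i:ℝ)+1)*θ+1) / C)) := by
          apply div_le_div₀ (by positivity) hnum (by positivity)
          exact mul_le_mul_of_nonneg_left hGlb (by positivity)
      _ ≤ P^(i+1) / ((1-θ)^(i:ℕ) * ((2*w)^(i+1) * 1 / C)) := by
          apply div_le_div_of_nonneg_left (by positivity) (by positivity)
          apply mul_le_mul_of_nonneg_left _ (by positivity)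
          exact div_le_div_of_nonneg_right hsxlb hC.le
      _ = (C*(1-θ)/2) * (1/2:ℝ)^i := by
          rw [hPw, mul_pow, mul_pow, mul_one]
          field_simp
          have h2 : (1/2:ℝ)^i * 2^i = 1 := by rw [← mul_pow]; norm_num
          linear_combination (-(2*(1-θ)^i*(1-θ))) * h2

lemma rpow_sub_integrable (t0 t α : ℝ) (hα : 0 < α) :
    IntervalIntegrable (fun s => (t - s) ^ (α - 1)) volume t0 t := by
  have h := (intervalIntegral.intervalIntegrable_rpow' (a := t - t0) (b := t - t)
    (r := α - 1) (by linarith)).comp_sub_left t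
  simpa using h

lemma integral_rpow_sub (t0 t α : ℝ) (h : t0 ≤ t) (hα : 0 < α) :
    ∫ s in t0..t, (t - s) ^ (α - 1) = (t - t0) ^ α / α := by
  rw [intervalIntegral.integral_comp_sub_left (fun u => u ^ (α - 1)) t, sub_self]
  rw [integral_rpow (Or.inl (by linarith))]
  rw [Real.zero_rpow (by linarith : α - 1 + 1 ≠ 0)]
  ring_nf

lemma term_abs_bound (t0 T θ γ b : ℝ) (hθ0 : 0 < θ) (hθ1 : θ < 1) (hb : 0 < b)
    (h : ℝ → ℝ) (K : ℝ) (hK0 : 0 ≤ K) (hK : ∀ s ∈ Icc t0 T, |h s| ≤ K)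
    (hc : ContinuousOn h (Icc t0 T)) (t : ℝ) (ht : t ∈ Icc t0 T) (i : ℕ) :
    |genBinom γ (i+1) * θ^(i+1) / (b * (1-θ)^(i:ℕ) * Real.Gamma (((i:ℝ)+1)*θ)) *
      ∫ s in t0..t, (t - s)^(((i:ℝ)+1)*θ - 1) * h s| ≤
    (K / b) * (|genBinom γ (i+1)| * θ^(i+1) * (T-t0)^(((i:ℝ)+1)*θ) /
      ((1-θ)^(i:ℕ) * Real.Gamma (((i:ℝ)+1)*θ+1))) := by
  have h1θ : 0 < 1 - θ := by linarith
  set α : ℝ := ((i:ℝ)+1)*θ with hαdef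
  have hα : 0 < α := by positivity
  have ht0t : t0 ≤ t := ht.1
  have htT : t ≤ T := ht.2
  have hGα : 0 < Real.Gamma α := Real.Gamma_pos_of_pos hα
  have hsub : Set.uIcc t0 t ⊆ Icc t0 T := by
    rw [Set.uIcc_of_le ht0t]; exact Icc_subset_Icc le_rfl htT
  have hφint : IntervalIntegrable (fun s => (t - s) ^ (α - 1)) volume t0 t :=
    rpow_sub_integrable t0 t α hα
  have hint : IntervalIntegrable (fun s => (t - s) ^ (α - 1) * h s) volume t0 t :=
    hφint.mul_continuousOn (hc.mono hsub)
  have hIb : |∫ s in t0..t, (t - s) ^ (α - 1) * h s| ≤ K * ((t - t0) ^ α / α) := by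
    calc |∫ s in t0..t, (t - s) ^ (α - 1) * h s|
        ≤ ∫ s in t0..t, |(t - s) ^ (α - 1) * h s| :=
          intervalIntegral.abs_integral_le_integral_abs ht0t
      _ ≤ ∫ s in t0..t, (t - s) ^ (α - 1) * K := by
          apply intervalIntegral.integral_mono_on ht0t hint.abs (hφint.mul_const K)
          intro s hs
          rw [abs_mul, abs_of_nonneg (Real.rpow_nonneg (by linarith [hs.2]) _)]
          exact mul_le_mul_of_nonneg_left (hK s ⟨hs.1, le_trans hs.2 htT⟩)
            (Real.rpow_nonneg (by linarith [hs.2]) _)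
      _ = K * ((t - t0) ^ α / α) := by
          rw [intervalIntegral.integral_mul_const, integral_rpow_sub t0 t α ht0t hα]
          ring
  have habs : |genBinom γ (i+1) * θ^(i+1) / (b * (1-θ)^(i:ℕ) * Real.Gamma α)| =
      |genBinom γ (i+1)| * θ^(i+1) / (b * (1-θ)^(i:ℕ) * Real.Gamma α) := by
    rw [abs_div, abs_mul, abs_of_pos (by positivity : (0:ℝ) < θ^(i+1)),
      abs_of_pos (by positivity : (0:ℝ) < b * (1-θ)^(i:ℕ) * Real.Gamma α)]
  rw [abs_mul, habs]
  have hmono : (t - t0) ^ α ≤ (T - t0) ^ α :=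
    Real.rpow_le_rpow (by linarith) (by linarith) hα.le
  have hGadd : Real.Gamma (α + 1) = α * Real.Gamma α := Real.Gamma_add_one hα.ne'
  calc |genBinom γ (i+1)| * θ^(i+1) / (b * (1-θ)^(i:ℕ) * Real.Gamma α) *
        |∫ s in t0..t, (t - s) ^ (α - 1) * h s|
      ≤ |genBinom γ (i+1)| * θ^(i+1) / (b * (1-θ)^(i:ℕ) * Real.Gamma α) *
        (K * ((T - t0) ^ α / α)) := by
        apply mul_le_mul_of_nonneg_left _ (by positivity)
        refine le_trans hIb ?_
        apply mul_le_mul_of_nonneg_left _ hK0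
        exact div_le_div_of_nonneg_right hmono hα.le
    _ = (K / b) * (|genBinom γ (i+1)| * θ^(i+1) * (T-t0)^α / ((1-θ)^(i:ℕ) * Real.Gamma (α+1))) := by
        rw [hGadd]
        field_simp


/-- Contraction estimate for the operator `Υ`, case `μ = 1`. -/
theorem upsilon_contraction_estimate_mu_eq_one
    (t0 T θ γ b A x0 : ℝ) (htT : t0 < T) (hθ0 : 0 < θ) (hθ1 : θ < 1)
    (hγ : 0 < γ) (hb : 0 < b) (hA : 0 < A)
    (f : ℝ → ℝ → ℝ)
    (hfc : ContinuousOn (fun p : ℝ × ℝ => f p.1 p.2) (Set.Icc t0 T ×ˢ Set.univ))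
    (hLip : ∀ t ∈ Set.Icc t0 T, ∀ y1 y2 : ℝ, |f t y1 - f t y2| ≤ A * |y1 - y2|)
    (x1 x2 : ℝ → ℝ)
    (h1c : ContinuousOn x1 (Set.Icc t0 T))
    (h2c : ContinuousOn x2 (Set.Icc t0 T)) :
    ∀ t ∈ Set.Icc t0 T,
      |UpsilonMuOne t0 b θ γ x0 f x1 t - UpsilonMuOne t0 b θ γ x0 f x2 t| ≤
      C2const t0 T b θ γ A * sSup ((fun s => |x1 s - x2 s|) '' Set.Icc t0 T) := by
  have h1θ : 0 < 1 - θ := by linarith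
  -- continuity of the composed functions
  have h1f : ContinuousOn (fun s => f s (x1 s)) (Icc t0 T) :=
    hfc.comp (continuousOn_id.prodMk h1c) (fun s hs => ⟨hs, mem_univ _⟩)
  have h2f : ContinuousOn (fun s => f s (x2 s)) (Icc t0 T) :=
    hfc.comp (continuousOn_id.prodMk h2c) (fun s hs => ⟨hs, mem_univ _⟩)
  -- bounds for the composed functions
  obtain ⟨K1, hK1⟩ := isCompact_Icc.exists_bound_of_continuousOn h1f
  obtain ⟨K2, hK2⟩ := isCompact_Icc.exists_bound_of_continuousOn h2f
  have ht0mem : t0 ∈ Icc t0 T := ⟨le_rfl, htT.le⟩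
  have hK10 : 0 ≤ K1 := le_trans (norm_nonneg _) (hK1 t0 ht0mem)
  have hK20 : 0 ≤ K2 := le_trans (norm_nonneg _) (hK2 t0 ht0mem)
  -- the sup M
  set M : ℝ := sSup ((fun s => |x1 s - x2 s|) '' Set.Icc t0 T) with hMdef
  have hgc0 : ContinuousOn (fun s => |x1 s - x2 s|) (Icc t0 T) := (h1c.sub h2c).abs
  have hbdd : BddAbove ((fun s => |x1 s - x2 s|) '' Set.Icc t0 T) :=
    (isCompact_Icc.image_of_continuousOn hgc0).bddAbove
  have hMb : ∀ s ∈ Icc t0 T, |x1 s - x2 s| ≤ M := fun s hs => le_csSup hbdd ⟨s, hs, rfl⟩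
  have hM0 : 0 ≤ M := le_trans (abs_nonneg _) (hMb t0 ht0mem)
  -- the difference function g
  set g : ℝ → ℝ := fun s => f s (x1 s) - f s (x2 s) with hgdef
  have hgc : ContinuousOn g (Icc t0 T) := h1f.sub h2f
  have hgB : ∀ s ∈ Icc t0 T, |g s| ≤ A * M := fun s hs =>
    le_trans (hLip s hs _ _) (mul_le_mul_of_nonneg_left (hMb s hs) hA.le)
  -- summability of the master series
  have Esum : Summable (fun i : ℕ => |genBinom γ (i+1)| * θ^(i+1) * (T-t0) ^ (((i:ℝ)+1)*θ) /
      ((1-θ)^(i:ℕ) * Real.Gamma (((i:ℝ)+1)*θ+1))) :=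
    master_summable θ γ (T - t0) hθ0 hθ1 hγ.le (by linarith)
  intro t ht
  -- term functions
  set a : (ℝ → ℝ) → ℕ → ℝ := fun h i =>
    genBinom γ (i+1) * θ^(i+1) / (b * (1-θ)^(i:ℕ) * Real.Gamma (((i:ℝ)+1)*θ)) *
      ∫ s in t0..t, (t - s)^(((i:ℝ)+1)*θ - 1) * h s with hadef
  have habs : ∀ (h : ℝ → ℝ) (K : ℝ), 0 ≤ K → (∀ s ∈ Icc t0 T, |h s| ≤ K) →
      ContinuousOn h (Icc t0 T) → ∀ i, |a h i| ≤
      (K / b) * (|genBinom γ (i+1)| * θ^(i+1) * (T-t0)^(((i:ℝ)+1)*θ) /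
        ((1-θ)^(i:ℕ) * Real.Gamma (((i:ℝ)+1)*θ+1))) := fun h K hK0 hK hc i =>
    term_abs_bound t0 T θ γ b hθ0 hθ1 hb h K hK0 hK hc t ht i
  have hK1' : ∀ s ∈ Icc t0 T, |f s (x1 s)| ≤ K1 := fun s hs => by
    have := hK1 s hs; rwa [Real.norm_eq_abs] at this
  have hK2' : ∀ s ∈ Icc t0 T, |f s (x2 s)| ≤ K2 := fun s hs => by
    have := hK2 s hs; rwa [Real.norm_eq_abs] at this
  have hsummany : ∀ (h : ℝ → ℝ) (K : ℝ), 0 ≤ K → (∀ s ∈ Icc t0 T, |h s| ≤ K) →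
      ContinuousOn h (Icc t0 T) → Summable (fun i => |a h i|) := by
    intro h K hK0 hK hc
    exact Summable.of_nonneg_of_le (fun i => abs_nonneg _) (habs h K hK0 hK hc)
      (Esum.mul_left (K/b))
  have hS1 : Summable (a (fun s => f s (x1 s))) :=
    (hsummany _ K1 hK10 hK1' h1f).of_abs
  have hS2 : Summable (a (fun s => f s (x2 s))) :=
    (hsummany _ K2 hK20 hK2' h2f).of_abs
  have hSg : Summable (fun i => |a g i|) := hsummany g (A*M) (by positivity) hgB hgc
  -- the integrability needed to split integrals
  have hintany : ∀ (h : ℝ → ℝ), ContinuousOn h (Icc t0 T) → ∀ i : ℕ,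
      IntervalIntegrable (fun s => (t - s)^(((i:ℝ)+1)*θ - 1) * h s) volume t0 t := by
    intro h hc i
    have hsub : Set.uIcc t0 t ⊆ Icc t0 T := by
      rw [Set.uIcc_of_le ht.1]; exact Icc_subset_Icc le_rfl ht.2
    exact (rpow_sub_integrable t0 t _ (by positivity)).mul_continuousOn (hc.mono hsub)
  have hdiffterm : ∀ i : ℕ, a (fun s => f s (x1 s)) i - a (fun s => f s (x2 s)) i = a g i := by
    intro i
    simp only [hadef]
    rw [← mul_sub, ← intervalIntegral.integral_sub (hintany _ h1f i) (hintany _ h2f i)]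
    congr 1
    apply intervalIntegral.integral_congr
    intro s _
    simp [hgdef]; ring
  -- main computation
  have hED : (UpsilonMuOne t0 b θ γ x0 f x1 t - UpsilonMuOne t0 b θ γ x0 f x2 t) =
      ((1-θ)/b) * (f t (x1 t) - f t (x2 t)) + ∑' i, a g i := by
    have h2 : (∑' i, a (fun s => f s (x1 s)) i) - (∑' i, a (fun s => f s (x2 s)) i)
        = ∑' i, a g i := by
      rw [← (hS1.hasSum.sub hS2.hasSum).tsum_eq]
      exact tsum_congr hdiffterm
    have h3 : (UpsilonMuOne t0 b θ γ x0 f x1 t - UpsilonMuOne t0 b θ γ x0 f x2 t) =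
        ((1-θ)/b) * (f t (x1 t) - f t (x2 t)) +
          ((∑' i, a (fun s => f s (x1 s)) i) - (∑' i, a (fun s => f s (x2 s)) i)) := by
      simp only [UpsilonMuOne, hadef]
      ring
    rw [h3, h2]
  have hE2 : |UpsilonMuOne t0 b θ γ x0 f x1 t - UpsilonMuOne t0 b θ γ x0 f x2 t| ≤
      ((1-θ)/b) * (A * M) + (A * M / b) *
        ∑' i : ℕ, |genBinom γ (i+1)| * θ^(i+1) * (T-t0) ^ (((i:ℝ)+1)*θ) /
          ((1-θ)^(i:ℕ) * Real.Gamma (((i:ℝ)+1)*θ+1)) := by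
    rw [hED]
    refine le_trans (abs_add_le _ _) (add_le_add ?_ ?_)
    · rw [abs_mul, abs_of_pos (by positivity : (0:ℝ) < (1-θ)/b)]
      exact mul_le_mul_of_nonneg_left
        (le_trans (hLip t ht _ _) (mul_le_mul_of_nonneg_left (hMb t ht) hA.le))
        (by positivity)
    · calc |∑' i, a g i| ≤ ∑' i, |a g i| := by
            have := norm_tsum_le_tsum_norm (by simpa [Real.norm_eq_abs] using hSg :
              Summable (fun i => ‖a g i‖))
            simpa [Real.norm_eq_abs] using this
        _ ≤ ∑' i : ℕ, (A * M / b) * (|genBinom γ (i+1)| * θ^(i+1) * (T-t0) ^ (((i:ℝ)+1)*θ) /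
              ((1-θ)^(i:ℕ) * Real.Gamma (((i:ℝ)+1)*θ+1))) :=
          Summable.tsum_le_tsum (habs g (A*M) (by positivity) hgB hgc) hSg (Esum.mul_left _)
        _ = (A * M / b) * ∑' i : ℕ, |genBinom γ (i+1)| * θ^(i+1) * (T-t0) ^ (((i:ℝ)+1)*θ) /
              ((1-θ)^(i:ℕ) * Real.Gamma (((i:ℝ)+1)*θ+1)) := tsum_mul_left
  refine le_trans hE2 (le_of_eq ?_)
  simp only [C2const]
  ring
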